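/- Let μ be the Gaussian probability measure on ℝ^m with mean a₀ ∈ ℝ^m and covariance σ²·I (σ > 0), i.e., with Lebesgue density x ↦ (2πσ²)^(-m/2)·exp(-‖x - a₀‖²/(2σ²)). Let β > 0, ε ≥ 0, G ≥ 0, and let f, g : ℝ^m → ℝ be continuously differentiable functions satisfying, for all x ∈ ℝ^m: |f(x) - g(x)| ≤ ε, ‖∇f(x) - ∇g(x)‖ ≤ ε, ‖∇f(x)‖ ≤ G, and ‖∇g(x)‖ ≤ G. Assume the functions exp(-f/β), exp(-g/β), exp(-f/β)·‖∇f‖ and exp(-g/β)·‖∇g‖ are μ-integrable with ∫ exp(-f/β) dμ > 0 and ∫ exp(-g/β) dμ > 0. Define the Gibbs-weighted scores φ_f = -(1/β)·(∫ exp(-f/β)·∇f dμ)/(∫ exp(-f/β) dμ) and φ_g = -(1/β)·(∫ exp(-g/β)·∇g dμ)/(∫ exp(-g/β) dμ). Then ‖φ_f - φ_g‖ ≤ (1/β)·(ε + G·(exp(2ε/β) - 1)). -/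

import Mathlib

open MeasureTheory

private lemma exp_sub_le {a b c : ℝ} (h : |a - b| ≤ c) :
    |Real.exp a - Real.exp b| ≤ Real.exp a * (Real.exp c - 1) := by
  have hc : 0 ≤ c := (abs_nonneg _).trans h
  rw [abs_le] at h
  have h1 : Real.exp b ≤ Real.exp a * Real.exp c := by
    rw [← Real.exp_add]; exact Real.exp_le_exp.2 (by linarith)
  have h2 : Real.exp a * Real.exp (-c) ≤ Real.exp b := by
    rw [← Real.exp_add]; exact Real.exp_le_exp.2 (by linarith)
  have huv : Real.exp c * Real.exp (-c) = 1 := by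
    rw [← Real.exp_add]; simp
  have h4 : (0:ℝ) < Real.exp c := Real.exp_pos c
  have ha : (0:ℝ) < Real.exp a := Real.exp_pos a
  rw [abs_le]
  constructor
  · nlinarith
  · nlinarith [mul_nonneg ha.le (sq_nonneg (Real.exp c - 1)),
      mul_le_mul_of_nonneg_right h2 h4.le]

/-- **Corollary: stability of the Gibbs-weighted score under Lagrangian approximation.**
Let `μ` be the Gaussian measure `N(a₀, σ²I)` on `ℝ^m` (realized as the measure with
Lebesgue density `x ↦ (2πσ²)^(-m/2)·exp(-‖x - a₀‖²/(2σ²))`), `β > 0`, `ε ≥ 0`, `G ≥ 0`,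
and let `f, g : ℝ^m → ℝ` be `C¹` with `|f - g| ≤ ε`, `‖∇f - ∇g‖ ≤ ε`, `‖∇f‖ ≤ G`,
`‖∇g‖ ≤ G` everywhere.  Assume `exp(-f/β)`, `exp(-g/β)`, `exp(-f/β)·‖∇f‖` and
`exp(-g/β)·‖∇g‖` are μ-integrable with `∫ exp(-f/β) dμ > 0` and `∫ exp(-g/β) dμ > 0`.
Then the Gibbs-weighted scores
`φ_f = -(1/β)·(∫ exp(-f/β)·∇f dμ)/(∫ exp(-f/β) dμ)` and `φ_g` (analogously) satisfy
`‖φ_f - φ_g‖ ≤ (1/β)·(ε + G·(exp(2ε/β) - 1))`. -/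
theorem gibbs_weighted_score_stability
    (m : ℕ) (a₀ : EuclideanSpace ℝ (Fin m)) (σ : ℝ) (hσ : 0 < σ)
    (β ε G : ℝ) (hβ : 0 < β) (hε : 0 ≤ ε) (hG : 0 ≤ G)
    (f g : EuclideanSpace ℝ (Fin m) → ℝ)
    (hf : ContDiff ℝ 1 f) (hg : ContDiff ℝ 1 g)
    (hval : ∀ x, |f x - g x| ≤ ε)
    (hgradgap : ∀ x, ‖gradient f x - gradient g x‖ ≤ ε)
    (hGf : ∀ x, ‖gradient f x‖ ≤ G) (hGg : ∀ x, ‖gradient g x‖ ≤ G) :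
    let μ : Measure (EuclideanSpace ℝ (Fin m)) :=
      volume.withDensity fun x => ENNReal.ofReal
        ((2 * Real.pi * σ ^ 2) ^ (-(m : ℝ) / 2) *
          Real.exp (-‖x - a₀‖ ^ 2 / (2 * σ ^ 2)))
    Integrable (fun x => Real.exp (-f x / β)) μ →
    Integrable (fun x => Real.exp (-f x / β) * ‖gradient f x‖) μ →
    Integrable (fun x => Real.exp (-g x / β)) μ →
    Integrable (fun x => Real.exp (-g x / β) * ‖gradient g x‖) μ →
    0 < (∫ x, Real.exp (-f x / β) ∂μ) →
    0 < (∫ x, Real.exp (-g x / β) ∂μ) →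
    ‖(-(1 / β)) • ((∫ x, Real.exp (-f x / β) ∂μ)⁻¹ •
          ∫ x, Real.exp (-f x / β) • gradient f x ∂μ)
      - (-(1 / β)) • ((∫ x, Real.exp (-g x / β) ∂μ)⁻¹ •
          ∫ x, Real.exp (-g x / β) • gradient g x ∂μ)‖
      ≤ (1 / β) * (ε + G * (Real.exp (2 * ε / β) - 1)) := by
  intro μ hIf hIf' hIg hIg' hZf hZg
  -- notation
  set Ef : EuclideanSpace ℝ (Fin m) → ℝ := fun x => Real.exp (-f x / β) with hEf
  set Eg : EuclideanSpace ℝ (Fin m) → ℝ := fun x => Real.exp (-g x / β) with hEg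
  have hEfpos : ∀ x, 0 < Ef x := fun x => Real.exp_pos _
  have hEgpos : ∀ x, 0 < Eg x := fun x => Real.exp_pos _
  set K : ℝ := Real.exp (ε / β) - 1 with hKdef
  have hK : 0 ≤ K :=
    sub_nonneg.2 (Real.one_le_exp (div_nonneg hε hβ.le))
  -- continuity of gradients
  have hgf_cont : Continuous (gradient f) := by
    have h1 := hf.continuous_fderiv one_ne_zero
    exact (InnerProductSpace.toDual ℝ
      (EuclideanSpace ℝ (Fin m))).symm.continuous.comp h1
  have hgg_cont : Continuous (gradient g) := by
    have h1 := hg.continuous_fderiv one_ne_zero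
    exact (InnerProductSpace.toDual ℝ
      (EuclideanSpace ℝ (Fin m))).symm.continuous.comp h1
  have hEf_cont : Continuous Ef :=
    Real.continuous_exp.comp ((hf.continuous.neg).div_const β)
  have hEg_cont : Continuous Eg :=
    Real.continuous_exp.comp ((hg.continuous.neg).div_const β)
  -- integrability of the vector-valued integrands
  have hVf_int : Integrable (fun x => Ef x • gradient f x) μ := by
    refine hIf'.mono' (hEf_cont.smul hgf_cont).aestronglyMeasurable
      (Filter.Eventually.of_forall fun x => ?_)
    rw [norm_smul, Real.norm_eq_abs, abs_of_pos (hEfpos x)]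
  have hVg_int : Integrable (fun x => Eg x • gradient g x) μ := by
    refine hIg'.mono' (hEg_cont.smul hgg_cont).aestronglyMeasurable
      (Filter.Eventually.of_forall fun x => ?_)
    rw [norm_smul, Real.norm_eq_abs, abs_of_pos (hEgpos x)]
  set Zf : ℝ := ∫ x, Ef x ∂μ with hZfdef
  set Zg : ℝ := ∫ x, Eg x ∂μ with hZgdef
  set Vf := ∫ x, Ef x • gradient f x ∂μ with hVfdef
  set Vg := ∫ x, Eg x • gradient g x ∂μ with hVgdef
  -- pointwise estimate on the density gap
  have hpt : ∀ x, |Ef x - Eg x| ≤ Ef x * K := by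
    intro x
    have habs : |(-f x / β) - (-g x / β)| ≤ ε / β := by
      have h1 : -f x / β - -g x / β = (g x - f x) / β := by ring
      rw [h1, abs_div, abs_of_pos hβ]
      exact (div_le_div_iff_of_pos_right hβ).2 (by rw [abs_sub_comm]; exact hval x)
    simpa [hEf, hEg, hKdef] using exp_sub_le habs
  -- |Zf - Zg| ≤ K * Zf
  have hZdiff : |Zf - Zg| ≤ K * Zf := by
    have h1 : Zf - Zg = ∫ x, (Ef x - Eg x) ∂μ := (integral_sub hIf hIg).symm
    rw [h1]
    calc |∫ x, (Ef x - Eg x) ∂μ| ≤ ∫ x, |Ef x - Eg x| ∂μ := by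
          simpa [Real.norm_eq_abs] using
            norm_integral_le_integral_norm (μ := μ) (f := fun x => Ef x - Eg x)
      _ ≤ ∫ x, Ef x * K ∂μ :=
          integral_mono (hIf.sub hIg).abs (hIf.mul_const K) fun x => hpt x
      _ = K * Zf := by rw [integral_mul_const]; ring
  -- ‖Vf - Vg‖ ≤ (ε + G * K) * Zf
  have hVdiff : ‖Vf - Vg‖ ≤ (ε + G * K) * Zf := by
    have h1 : Vf - Vg = ∫ x, (Ef x • gradient f x - Eg x • gradient g x) ∂μ :=
      (integral_sub hVf_int hVg_int).symm
    rw [h1]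
    have hb : Integrable (fun x => (ε + G * K) * Ef x) μ := hIf.const_mul _
    refine (norm_integral_le_of_norm_le hb
      (Filter.Eventually.of_forall fun x => ?_)).trans ?_
    · have key : Ef x • gradient f x - Eg x • gradient g x
          = Ef x • (gradient f x - gradient g x) + (Ef x - Eg x) • gradient g x := by
        rw [smul_sub, sub_smul]; abel
      rw [key]
      refine (norm_add_le _ _).trans ?_
      rw [norm_smul, norm_smul, Real.norm_eq_abs, Real.norm_eq_abs,
        abs_of_pos (hEfpos x)]
      have t1 : Ef x * ‖gradient f x - gradient g x‖ ≤ Ef x * ε :=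
        mul_le_mul_of_nonneg_left (hgradgap x) (hEfpos x).le
      have t2 : |Ef x - Eg x| * ‖gradient g x‖ ≤ (Ef x * K) * G :=
        mul_le_mul (hpt x) (hGg x) (norm_nonneg _)
          (mul_nonneg (hEfpos x).le hK)
      nlinarith
    · rw [integral_const_mul]
  -- ‖Vg‖ ≤ G * Zg
  have hVgn : ‖Vg‖ ≤ G * Zg := by
    rw [hVgdef]
    refine (norm_integral_le_of_norm_le (hIg.const_mul G)
      (Filter.Eventually.of_forall fun x => ?_)).trans ?_
    · rw [norm_smul, Real.norm_eq_abs, abs_of_pos (hEgpos x)]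
      exact mul_le_mul_of_nonneg_left (hGg x) (hEgpos x).le |>.trans
        (by rw [mul_comm])
    · rw [integral_const_mul]
  -- assemble
  have hsplit : Zf⁻¹ • Vf - Zg⁻¹ • Vg
      = Zf⁻¹ • (Vf - Vg) + (Zf⁻¹ - Zg⁻¹) • Vg := by
    rw [smul_sub, sub_smul]; abel
  have hmain : ‖Zf⁻¹ • Vf - Zg⁻¹ • Vg‖ ≤ ε + 2 * (G * K) := by
    rw [hsplit]
    refine (norm_add_le _ _).trans ?_
    rw [norm_smul, norm_smul, Real.norm_eq_abs, Real.norm_eq_abs,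
      abs_of_pos (inv_pos.2 hZf)]
    have t1 : Zf⁻¹ * ‖Vf - Vg‖ ≤ ε + G * K := by
      have := mul_le_mul_of_nonneg_left hVdiff (inv_pos.2 hZf).le
      rwa [mul_comm (ε + G * K) Zf, ← mul_assoc, inv_mul_cancel₀ hZf.ne',
        one_mul] at this
    have t2 : |Zf⁻¹ - Zg⁻¹| * ‖Vg‖ ≤ G * K := by
      have hinv : Zf⁻¹ - Zg⁻¹ = (Zg - Zf) * (Zf⁻¹ * Zg⁻¹) := by
        field_simp
      have h3 : |Zf⁻¹ - Zg⁻¹| ≤ K * Zg⁻¹ := by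
        rw [hinv, abs_mul, abs_of_pos (mul_pos (inv_pos.2 hZf) (inv_pos.2 hZg))]
        calc |Zg - Zf| * (Zf⁻¹ * Zg⁻¹) ≤ (K * Zf) * (Zf⁻¹ * Zg⁻¹) := by
              apply mul_le_mul_of_nonneg_right _ (by positivity)
              rw [abs_sub_comm]; exact hZdiff
          _ = K * Zg⁻¹ := by field_simp
      calc |Zf⁻¹ - Zg⁻¹| * ‖Vg‖ ≤ (K * Zg⁻¹) * (G * Zg) :=
            mul_le_mul h3 hVgn (norm_nonneg _) (by positivity)
        _ = G * K := by field_simp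
    linarith
  -- final computation
  have hfold : (-(1 / β)) • (Zf⁻¹ • Vf) - (-(1 / β)) • (Zg⁻¹ • Vg)
      = (-(1 / β)) • (Zf⁻¹ • Vf - Zg⁻¹ • Vg) := (smul_sub _ _ _).symm
  rw [hfold, norm_smul, Real.norm_eq_abs, abs_neg, abs_of_pos (by simp [hβ] : (0:ℝ) < 1 / β)]
  have hexp2 : Real.exp (2 * ε / β) = Real.exp (ε / β) * Real.exp (ε / β) := by
    rw [← Real.exp_add]; ring_nf
  have hD : 1 ≤ Real.exp (ε / β) := Real.one_le_exp (div_nonneg hε hβ.le)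
  have hfin : ε + 2 * (G * K) ≤ ε + G * (Real.exp (2 * ε / β) - 1) := by
    rw [hexp2]
    have : 2 * K ≤ Real.exp (ε / β) * Real.exp (ε / β) - 1 := by
      rw [hKdef]; nlinarith
    nlinarith
  calc (1 / β) * ‖Zf⁻¹ • Vf - Zg⁻¹ • Vg‖ ≤ (1 / β) * (ε + 2 * (G * K)) :=
        mul_le_mul_of_nonneg_left hmain (by simp [hβ.le] : (0:ℝ) ≤ 1/β)
    _ ≤ (1 / β) * (ε + G * (Real.exp (2 * ε / β) - 1)) :=
        mul_le_mul_of_nonneg_left hfin (by simp [hβ.le] : (0:ℝ) ≤ 1/β)
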